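/- Assume b·γ > μ, b·K·γ − a·μ − K·μ > 0, and a·b·γ > b·K·γ − a·μ − K·μ, and let u₃ = a·μ/(b·γ − μ) and v₃ = a·α·γ·(b·γ·K − μ·(a + K))/(K·(b·γ − μ)²). Then the 2×2 Jacobian matrix at (u₃, v₃) of the planar predator–prey subsystem u' = α·u·(1 − u/K) − b·u·v/(u + a), v' = γ·b·u·v/(u + a) − μ·v has negative trace and positive determinant; consequently both of its (complex) eigenvalues have negative real part, i.e. (u₃, v₃) is a linearly asymptotically stable equilibrium of the planar subsystem. -/

import Mathlib

/-- The planar predator–prey subsystem obtained by setting `w = 0` in the tritrophic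
system: `u' = αu(1 - u/K) - buv/(u+a)`, `v' = γbuv/(u+a) - μv`. -/
noncomputable def planarField (α K a b γ μ : ℝ) (p : Fin 2 → ℝ) : Fin 2 → ℝ :=
  ![α * p 0 * (1 - p 0 / K) - b * p 0 * p 1 / (p 0 + a),
    γ * (b * p 0 * p 1 / (p 0 + a)) - μ * p 1]

/-- The Jacobian matrix of a vector field on ℝ². -/
noncomputable def jacobian2 (Φ : (Fin 2 → ℝ) → Fin 2 → ℝ) (p : Fin 2 → ℝ) :
    Matrix (Fin 2) (Fin 2) ℝ :=
  Matrix.of fun i j => deriv (fun s => Φ (Function.update p j s) i) (p j)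

/-- Jacobian entries of the planar field, in closed form. -/
lemma jacobian2_planar_entries (α K a b γ μ u₃ v₃ : ℝ) (hne : u₃ + a ≠ 0) :
    jacobian2 (planarField α K a b γ μ) ![u₃, v₃] 0 0 =
        α * 1 * (1 - u₃ / K) + α * u₃ * (0 - 1 / K)
          - (b * 1 * v₃ * (u₃ + a) - b * u₃ * v₃ * 1) / (u₃ + a) ^ 2 ∧
    jacobian2 (planarField α K a b γ μ) ![u₃, v₃] 0 1 =
        0 - b * u₃ * 1 / (u₃ + a) ∧
    jacobian2 (planarField α K a b γ μ) ![u₃, v₃] 1 0 =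
        γ * ((b * 1 * v₃ * (u₃ + a) - b * u₃ * v₃ * 1) / (u₃ + a) ^ 2) ∧
    jacobian2 (planarField α K a b γ μ) ![u₃, v₃] 1 1 =
        γ * (b * u₃ * 1 / (u₃ + a)) - μ * 1 := by
  have hupd0 : ∀ s : ℝ, Function.update ![u₃, v₃] (0 : Fin 2) s = ![s, v₃] := by
    intro s; funext i; fin_cases i <;> simp [Function.update]
  have hupd1 : ∀ s : ℝ, Function.update ![u₃, v₃] (1 : Fin 2) s = ![u₃, s] := by
    intro s; funext i; fin_cases i <;> simp [Function.update]
  have hB : HasDerivAt (fun s : ℝ => b * s * v₃ / (s + a))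
      ((b * 1 * v₃ * (u₃ + a) - b * u₃ * v₃ * 1) / (u₃ + a) ^ 2) u₃ := by
    have hn : HasDerivAt (fun s : ℝ => b * s * v₃) (b * 1 * v₃) u₃ :=
      ((hasDerivAt_id u₃).const_mul b).mul_const v₃
    have hd : HasDerivAt (fun s : ℝ => s + a) 1 u₃ := (hasDerivAt_id u₃).add_const a
    simpa using hn.fun_div hd hne
  refine ⟨?_, ?_, ?_, ?_⟩
  · have hfun : (fun s => planarField α K a b γ μ (Function.update ![u₃, v₃] 0 s) 0)
        = fun s => α * s * (1 - s / K) - b * s * v₃ / (s + a) := by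
      funext s; rw [hupd0]; simp [planarField]
    have hA : HasDerivAt (fun s : ℝ => α * s * (1 - s / K))
        (α * 1 * (1 - u₃ / K) + α * u₃ * (0 - 1 / K)) u₃ :=
      ((hasDerivAt_id u₃).const_mul α).mul
        ((hasDerivAt_const u₃ 1).sub ((hasDerivAt_id u₃).div_const K))
    simp only [jacobian2, Matrix.of_apply, Matrix.cons_val_zero]
    rw [hfun]
    exact (hA.sub hB).deriv
  · have hfun : (fun s => planarField α K a b γ μ (Function.update ![u₃, v₃] 1 s) 0)
        = fun s => α * u₃ * (1 - u₃ / K) - b * u₃ * s / (u₃ + a) := by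
      funext s; rw [hupd1]; simp [planarField]
    have hA : HasDerivAt (fun s : ℝ => α * u₃ * (1 - u₃ / K) - b * u₃ * s / (u₃ + a))
        (0 - b * u₃ * 1 / (u₃ + a)) v₃ :=
      (hasDerivAt_const v₃ _).sub
        ((((hasDerivAt_id v₃).const_mul (b * u₃))).div_const (u₃ + a))
    simp only [jacobian2, Matrix.of_apply, Matrix.cons_val_one, Matrix.head_cons]
    rw [hfun]
    exact hA.deriv
  · have hfun : (fun s => planarField α K a b γ μ (Function.update ![u₃, v₃] 0 s) 1)
        = fun s => γ * (b * s * v₃ / (s + a)) - μ * v₃ := by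
      funext s; rw [hupd0]; simp [planarField]
    have hA : HasDerivAt (fun s : ℝ => γ * (b * s * v₃ / (s + a)) - μ * v₃)
        (γ * ((b * 1 * v₃ * (u₃ + a) - b * u₃ * v₃ * 1) / (u₃ + a) ^ 2)) u₃ :=
      (hB.const_mul γ).sub_const (μ * v₃)
    simp only [jacobian2, Matrix.of_apply, Matrix.cons_val_zero]
    rw [hfun]
    exact hA.deriv
  · have hfun : (fun s => planarField α K a b γ μ (Function.update ![u₃, v₃] 1 s) 1)
        = fun s => γ * (b * u₃ * s / (u₃ + a)) - μ * s := by
      funext s; rw [hupd1]; simp [planarField]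
    have hA : HasDerivAt (fun s : ℝ => γ * (b * u₃ * s / (u₃ + a)) - μ * s)
        (γ * (b * u₃ * 1 / (u₃ + a)) - μ * 1) v₃ :=
      (((((hasDerivAt_id v₃).const_mul (b * u₃))).div_const (u₃ + a)).const_mul γ).sub
        ((hasDerivAt_id v₃).const_mul μ)
    simp only [jacobian2, Matrix.of_apply, Matrix.cons_val_one, Matrix.head_cons]
    rw [hfun]
    exact hA.deriv

/-- Under `bγ > μ`, `bKγ - aμ - Kμ > 0` and `abγ > bKγ - aμ - Kμ`, the 2×2 Jacobian of
the planar predator–prey subsystem at its positive equilibrium `(u₃, v₃)` has negative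
trace and positive determinant; consequently every complex eigenvalue has negative real
part: `(u₃, v₃)` is linearly asymptotically stable. -/
theorem planar_equilibrium_stable
    (α K a b γ μ : ℝ)
    (hα : 0 < α) (hK : 0 < K) (ha : 0 < a) (hb : 0 < b)
    (hγ : 0 < γ) (hμ : 0 < μ)
    (h₁ : μ < b * γ)
    (h₂ : 0 < b * K * γ - a * μ - K * μ)
    (h₃ : b * K * γ - a * μ - K * μ < a * b * γ)
    (u₃ v₃ : ℝ)
    (hu₃ : u₃ = a * μ / (b * γ - μ))
    (hv₃ : v₃ = a * α * γ * (b * γ * K - μ * (a + K)) / (K * (b * γ - μ) ^ 2)) :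
    (jacobian2 (planarField α K a b γ μ) ![u₃, v₃]).trace < 0 ∧
    0 < (jacobian2 (planarField α K a b γ μ) ![u₃, v₃]).det ∧
    ∀ z : ℂ,
      (((jacobian2 (planarField α K a b γ μ) ![u₃, v₃]).map ((↑) : ℝ → ℂ))
          - z • (1 : Matrix (Fin 2) (Fin 2) ℂ)).det = 0 → z.re < 0 := by
  have hD : 0 < b * γ - μ := by linarith
  have hu3pos : 0 < u₃ := by rw [hu₃]; exact div_pos (by positivity) hD
  have hv3pos : 0 < v₃ := by
    rw [hv₃]
    apply div_pos
    · have : 0 < b * γ * K - μ * (a + K) := by nlinarith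
      positivity
    · positivity
  have hne : u₃ + a ≠ 0 := by positivity
  obtain ⟨e00, e01, e10, e11⟩ := jacobian2_planar_entries α K a b γ μ u₃ v₃ hne
  set M := jacobian2 (planarField α K a b γ μ) ![u₃, v₃] with hM
  clear_value M
  -- J11 = 0 at equilibrium
  have h11 : M 1 1 = 0 := by
    rw [e11, hu₃]
    have hD' : b * γ - μ ≠ 0 := ne_of_gt hD
    have hne' : a * μ / (b * γ - μ) + a ≠ 0 := by
      have : 0 < a * μ / (b * γ - μ) + a := by positivity
      positivity
    rw [sub_eq_zero, mul_div_assoc', div_eq_iff hne']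
    linear_combination (div_mul_cancel₀ (a * μ) hD')
  -- trace is negative
  have hT : M.trace < 0 := by
    rw [Matrix.trace_fin_two, h11, add_zero, e00]
    have key : α * 1 * (1 - u₃ / K) + α * u₃ * (0 - 1 / K)
        - (b * 1 * v₃ * (u₃ + a) - b * u₃ * v₃ * 1) / (u₃ + a) ^ 2
        = α * μ * ((b * K * γ - a * μ - K * μ) - a * b * γ)
            / (K * (b * γ - μ) * (b * γ)) := by
      rw [hu₃, hv₃]
      have hD' : b * γ - μ ≠ 0 := ne_of_gt hD
      have hsum : a * μ / (b * γ - μ) + a = a * b * γ / (b * γ - μ) := by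
        field_simp; ring
      rw [hsum]
      field_simp
      ring
    rw [key]
    apply div_neg_of_neg_of_pos
    · have h : (b * K * γ - a * μ - K * μ) - a * b * γ < 0 := by linarith
      exact mul_neg_of_pos_of_neg (by positivity) h
    · positivity
  -- determinant is positive
  have hDet : 0 < M.det := by
    rw [Matrix.det_fin_two, h11, mul_zero, zero_sub, e01, e10]
    have h01 : 0 < b * u₃ * 1 / (u₃ + a) := by positivity
    have h10 : 0 < γ * ((b * 1 * v₃ * (u₃ + a) - b * u₃ * v₃ * 1) / (u₃ + a) ^ 2) := by
      have hnum : b * 1 * v₃ * (u₃ + a) - b * u₃ * v₃ * 1 = b * v₃ * a := by ring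
      rw [hnum]
      positivity
    nlinarith [mul_pos h01 h10]
  refine ⟨hT, hDet, ?_⟩
  intro z hz
  -- reduce the characteristic equation to z² - T z + D = 0
  have hchar : z ^ 2 - (M.trace : ℂ) * z + (M.det : ℂ) = 0 := by
    have hz' : ((M 0 0 : ℂ) - z) * ((M 1 1 : ℂ) - z)
        - (M 0 1 : ℂ) * (M 1 0 : ℂ) = 0 := by
      simpa [Matrix.det_fin_two, Matrix.map_apply, Matrix.sub_apply,
        Matrix.smul_apply, Matrix.one_apply, smul_eq_mul] using hz
    rw [Matrix.trace_fin_two, Matrix.det_fin_two]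
    push_cast
    linear_combination hz'
  have hre := congrArg Complex.re hchar
  have him := congrArg Complex.im hchar
  simp [pow_two, Complex.mul_re, Complex.mul_im, Complex.add_re, Complex.add_im,
    Complex.sub_re, Complex.sub_im, Complex.ofReal_re, Complex.ofReal_im] at hre him
  -- him : z.im * (2 z.re - T) = 0 in some form; hre : real part equation
  by_contra hx
  push_neg at hx
  have h2xT : 0 < 2 * z.re - M.trace := by linarith
  have hfac : z.im * (2 * z.re - M.trace) = 0 := by linear_combination him
  have hy : z.im = 0 := by
    rcases mul_eq_zero.mp hfac with h | h
    · exact h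
    · exact absurd h (ne_of_gt h2xT)
  rw [hy] at hre
  nlinarith [hre, mul_nonneg hx hx, mul_nonpos_of_nonpos_of_nonneg (le_of_lt hT) hx]
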